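/- Let x : ℕ → ℝ, E ∈ ℝ, 0 < δ ≤ 1, b > 0, and D ≥ 1. Assume: (i) |x_i − E| ≥ δ/2 for all i; (ii) for every integer m ≥ 1, the set {i ∈ ℕ : δ/2 + (m − 1) ≤ |x_i − E| ≤ δ/2 + m} has at most D·√m elements; (iii) δ ≥ 8·b·√D. Then ∑_{i∈ℕ} b/((x_i − E)² + b²) ≤ 1/(4b). -/

import Mathlib

lemma stmt16_aux (b D δ : ℝ) (hb : 0 < b) (hD : 1 ≤ D) (hδ : 0 ≤ δ) (k : ℕ) :
    D * Real.sqrt ((k:ℝ)+2) * (b / ((δ/2 + (((k:ℝ)+2) - 1))^2 + b^2)) ≤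
      8*D*b*(1/Real.sqrt ((k:ℝ)+1) - 1/Real.sqrt ((k:ℝ)+2)) := by
  set u := Real.sqrt ((k:ℝ)+1) with hu
  set v := Real.sqrt ((k:ℝ)+2) with hv
  have hu2 : u^2 = (k:ℝ)+1 := Real.sq_sqrt (by positivity)
  have hv2 : v^2 = (k:ℝ)+2 := Real.sq_sqrt (by positivity)
  have hu0 : 0 < u := Real.sqrt_pos.mpr (by positivity)
  have hv0 : 0 < v := Real.sqrt_pos.mpr (by positivity)
  have hu1 : 1 ≤ u := by nlinarith
  have huv : u ≤ v := Real.sqrt_le_sqrt (by linarith)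
  have hv2u : v ≤ 2*u := by nlinarith
  have hvu : (v - u)*(v + u) = 1 := by nlinarith
  have f1 : u^2*v^2 = u^4 + u^2 := by linear_combination u^2*hv2 - u^2*hu2
  have f3 : u*v^3 = u^3*v + u*v := by linear_combination (u*v)*hv2 - (u*v)*hu2
  have f4 : u^3*v ≤ 2*u^4 := by nlinarith [pow_pos hu0 3]
  have f5 : u*v ≤ 2*u^2 := by nlinarith
  have hA : u*v^2*(u+v) ≤ 8*u^4 := by nlinarith [f1, f3, f4, f5, hu1, sq_nonneg u]
  have hvu4 : 8*(v-u)*(u+v)*u^4 = 8*u^4 := by linear_combination 8*u^4*hvu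
  have hsum : (0:ℝ) < u + v := by positivity
  have hpure : v*(u*v) ≤ 8*(v-u)*u^4 := by nlinarith [hA, hvu4, hsum]
  have step1 : D * v * (b / ((δ/2 + (((k:ℝ)+2) - 1))^2 + b^2)) ≤ D * v * (b / (((k:ℝ)+1)^2)) := by
    apply mul_le_mul_of_nonneg_left _ (by positivity)
    apply div_le_div_of_nonneg_left hb.le (by positivity)
    nlinarith [sq_nonneg b, Nat.cast_nonneg (α := ℝ) k]
  refine le_trans step1 ?_
  have hk1 : ((k:ℝ)+1)^2 = u^4 := by rw [← hu2]; ring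
  calc D * v * (b / (((k:ℝ)+1)^2)) = (D*v*b)/u^4 := by rw [hk1]; ring
    _ ≤ (8*D*b*(v-u))/(u*v) := by
        rw [div_le_div_iff₀ (by positivity) (by positivity)]
        nlinarith [mul_le_mul_of_nonneg_left hpure (show (0:ℝ) ≤ D*b by positivity)]
    _ = 8*D*b*(1/u - 1/v) := by
        rw [div_sub_div _ _ (ne_of_gt hu0) (ne_of_gt hv0)]; ring

/-- (Estimate (4.4) from the Hölder regularity proof.) If no
particle lies within `δ/2` of `E`, the number of particles at distance in
`[δ/2 + (m−1), δ/2 + m]` from `E` is at most `D·√m` for every `m ≥ 1`, and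
`δ ≥ 8b√D`, then `∑ᵢ b/((xᵢ − E)² + b²) ≤ 1/(4b)`. -/
theorem stmt_16
    (x : ℕ → ℝ) (E δ b D : ℝ)
    (hδ : 0 < δ) (hδ1 : δ ≤ 1) (hb : 0 < b) (hD : 1 ≤ D)
    (hgap : ∀ i : ℕ, δ / 2 ≤ |x i - E|)
    (hcount : ∀ m : ℕ, 1 ≤ m →
      {i : ℕ | δ / 2 + ((m : ℝ) - 1) ≤ |x i - E| ∧ |x i - E| ≤ δ / 2 + m}.Finite ∧
      ({i : ℕ | δ / 2 + ((m : ℝ) - 1) ≤ |x i - E| ∧ |x i - E| ≤ δ / 2 + m}.ncard : ℝ)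
        ≤ D * Real.sqrt m)
    (hδb : 8 * b * Real.sqrt D ≤ δ) :
    ∑' i : ℕ, b / ((x i - E) ^ 2 + b ^ 2) ≤ 1 / (4 * b) := by
  -- basic facts
  have hδ2 : 64 * b ^ 2 * D ≤ δ ^ 2 := by
    have h1 : Real.sqrt D ^ 2 = D := Real.sq_sqrt (by linarith)
    have h0 : (0:ℝ) ≤ 8 * b * Real.sqrt D := by positivity
    nlinarith [mul_self_le_mul_self h0 hδb, h1]
  have hbD : 64 * D * b ^ 2 ≤ 1 := by nlinarith
  by_cases hsum : Summable (fun i : ℕ => b / ((x i - E) ^ 2 + b ^ 2))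
  swap
  · rw [tsum_eq_zero_of_not_summable hsum]; positivity
  apply Summable.tsum_le_of_sum_le hsum
  intro s
  set a : ℕ → ℝ := fun i => |x i - E| with ha
  have ha0 : ∀ i, δ / 2 ≤ a i := hgap
  set g : ℕ → ℕ := fun i => max ⌈a i - δ / 2⌉₊ 1 with hg
  have hg1 : ∀ i, 1 ≤ g i := fun i => le_max_right _ _
  have hmem : ∀ i, δ / 2 + ((g i : ℝ) - 1) ≤ a i ∧ a i ≤ δ / 2 + g i := by
    intro i
    have h0 : 0 ≤ a i - δ / 2 := by linarith [ha0 i]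
    constructor
    · rcases le_or_gt (⌈a i - δ / 2⌉₊) 1 with h | h
      · have hgi : g i = 1 := by simp only [hg]; omega
        rw [hgi]; push_cast; linarith
      · have hgi : g i = ⌈a i - δ / 2⌉₊ := by simp only [hg]; omega
        have := Nat.ceil_lt_add_one h0
        rw [hgi]; linarith
    · have h1 : a i - δ / 2 ≤ ⌈a i - δ / 2⌉₊ := Nat.le_ceil _
      have h2 : (⌈a i - δ / 2⌉₊ : ℝ) ≤ g i := by
        exact_mod_cast Nat.cast_le.mpr (le_max_left _ _)
      linarith
  -- per-shell bound function
  set F : ℕ → ℝ := fun m => b / ((δ / 2 + ((m : ℝ) - 1)) ^ 2 + b ^ 2) with hF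
  have hFpos : ∀ m, 0 ≤ F m := by
    intro m; apply div_nonneg hb.le; positivity
  -- pointwise bound
  have hpt : ∀ i, b / ((x i - E) ^ 2 + b ^ 2) ≤ F (g i) := by
    intro i
    have h1 : δ / 2 + ((g i : ℝ) - 1) ≤ a i := (hmem i).1
    have h2 : (0:ℝ) ≤ δ / 2 + ((g i : ℝ) - 1) := by
      have : (1:ℝ) ≤ (g i : ℝ) := by exact_mod_cast hg1 i
      linarith
    have h3 : (δ / 2 + ((g i : ℝ) - 1)) ^ 2 ≤ (x i - E) ^ 2 := by
      rw [← sq_abs (x i - E)]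
      exact pow_le_pow_left₀ h2 h1 2
    apply div_le_div_of_nonneg_left hb.le (by positivity)
    linarith
  calc ∑ i ∈ s, b / ((x i - E) ^ 2 + b ^ 2) ≤ ∑ i ∈ s, F (g i) :=
        Finset.sum_le_sum fun i _ => hpt i
    _ = ∑ m ∈ s.image g, (s.filter (fun i => g i = m)).card • F m := Finset.sum_comp F g
    _ ≤ ∑ m ∈ s.image g, D * Real.sqrt m * F m := by
        apply Finset.sum_le_sum
        intro m hm
        rw [nsmul_eq_mul]
        apply mul_le_mul_of_nonneg_right _ (hFpos m)
        -- card bound via hcount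
        obtain ⟨i₀, _, hgi₀⟩ := Finset.mem_image.mp hm
        have hm1 : 1 ≤ m := hgi₀ ▸ hg1 i₀
        obtain ⟨hfin, hcard⟩ := hcount m hm1
        refine le_trans ?_ hcard
        have hsub : (↑(s.filter (fun i => g i = m)) : Set ℕ) ⊆
            {i : ℕ | δ / 2 + ((m : ℝ) - 1) ≤ |x i - E| ∧ |x i - E| ≤ δ / 2 + m} := by
          intro i hi
          simp only [Finset.coe_filter, Set.mem_setOf_eq] at hi
          obtain ⟨_, hgi⟩ := hi
          have := hmem i
          rw [hgi] at this
          exact this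
        have := Set.ncard_le_ncard hsub hfin
        rw [Set.ncard_coe_finset] at this
        exact_mod_cast this
    _ ≤ 1 / (4 * b) := by
        set T := s.image g with hT
        have hT1 : ∀ m ∈ T, 1 ≤ m := by
          intro m hm
          obtain ⟨i₀, _, h⟩ := Finset.mem_image.mp hm
          exact h ▸ hg1 i₀
        set G : ℕ → ℝ := fun m => D * Real.sqrt m * F m with hGdef
        have hGpos : ∀ m, 0 ≤ G m := by
          intro m
          exact mul_nonneg (mul_nonneg (by linarith) (Real.sqrt_nonneg _)) (hFpos m)
        set p : ℕ → ℝ := fun k => 1 / Real.sqrt ((k : ℝ) + 1) with hp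
        have key : ∀ k : ℕ, G (k + 2) ≤ 8 * D * b * (p k - p (k + 1)) := by
          intro k
          have hGeq : G (k + 2) =
              D * Real.sqrt ((k:ℝ)+2) * (b / ((δ/2 + (((k:ℝ)+2) - 1))^2 + b^2)) := by
            simp only [hGdef, hF]
            push_cast
            ring_nf
          have hpk : p (k + 1) = 1 / Real.sqrt ((k:ℝ) + 2) := by
            simp only [hp]
            push_cast
            ring_nf
          rw [hGeq, hpk]
          exact stmt16_aux b D δ hb hD hδ.le k
        -- the m = 1 term
        have hG1 : G 1 ≤ 1 / (16 * b) := by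
          have e : G 1 = D * b / ((δ/2)^2 + b^2) := by
            simp only [hGdef, hF]
            norm_num
            ring
          rw [e, div_le_div_iff₀ (by positivity) (by positivity)]
          nlinarith [hδ2]
        -- the tail
        have htail : ∑ m ∈ T.erase 1, G m ≤ 1 / (8 * b) := by
          set N := T.sup id + 2 with hN
          have hsub : T.erase 1 ⊆ (Finset.range N).image (fun k => k + 2) := by
            intro m hm
            rw [Finset.mem_erase] at hm
            have h1 : 1 ≤ m := hT1 m hm.2
            have h3 : m ≤ T.sup id := Finset.le_sup (f := id) hm.2
            rw [Finset.mem_image]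
            exact ⟨m - 2, Finset.mem_range.mpr (by omega), by omega⟩
          calc ∑ m ∈ T.erase 1, G m
              ≤ ∑ m ∈ (Finset.range N).image (fun k => k + 2), G m :=
                Finset.sum_le_sum_of_subset_of_nonneg hsub (fun m _ _ => hGpos m)
            _ = ∑ k ∈ Finset.range N, G (k + 2) :=
                Finset.sum_image (by intro a _ c _ h; simp only at h; omega)
            _ ≤ ∑ k ∈ Finset.range N, 8 * D * b * (p k - p (k + 1)) :=
                Finset.sum_le_sum (fun k _ => key k)
            _ = 8 * D * b * (p 0 - p N) := by
                rw [← Finset.mul_sum, Finset.sum_range_sub' p N]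
            _ ≤ 8 * D * b * 1 := by
                have h0 : p 0 = 1 := by simp [hp]
                have h1 : 0 ≤ p N := by
                  simp only [hp]
                  positivity
                have hDb : (0:ℝ) ≤ 8 * D * b := by positivity
                apply mul_le_mul_of_nonneg_left _ hDb
                linarith
            _ ≤ 1 / (8 * b) := by
                rw [mul_one, le_div_iff₀ (by positivity)]
                nlinarith [hbD]
        have hsplit : ∑ m ∈ T, G m ≤ G 1 + ∑ m ∈ T.erase 1, G m := by
          by_cases h : 1 ∈ T
          · rw [← Finset.add_sum_erase T G h]
          · rw [Finset.erase_eq_of_notMem h]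
            have := hGpos 1
            linarith
        have efin : 1 / (16 * b) + 1 / (8 * b) = 3 / (16 * b) := by
          field_simp
          ring
        calc ∑ m ∈ T, G m ≤ G 1 + ∑ m ∈ T.erase 1, G m := hsplit
          _ ≤ 1 / (16 * b) + 1 / (8 * b) := add_le_add hG1 htail
          _ ≤ 1 / (4 * b) := by
              rw [efin, div_le_div_iff₀ (by positivity) (by positivity)]
              nlinarith
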